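/- For every real t ≥ 1, define H(t) = -(1/t)·log(1/t) - (1-1/t)·log(1-1/t) (with H(1) = 0). Then for any real σ > 0 and any natural number m, the number of sequences (k₀, ..., k_m) of positive integers with k₀ + ... + k_m ≤ (m+1)·σ is at most exp((m+1)·σ·H(max σ 1)). -/

import Mathlib

/-- The binary-entropy-type function `H(t) = -(1/t)·log(1/t) - (1-1/t)·log(1-1/t)`
(with the convention `Real.log 0 = 0`, so that `H 1 = 0`). -/
noncomputable def Hent (t : ℝ) : ℝ :=
  -(1 / t) * Real.log (1 / t) - (1 - 1 / t) * Real.log (1 - 1 / t)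

open Finset

private lemma ps_split {n : ℕ} (f : Fin n → ℕ) (j : Fin n) :
    ∑ i ∈ univ.filter (· ≤ j), f i = f j + ∑ i ∈ univ.filter (· < j), f i := by
  have h : univ.filter (· ≤ j) = insert j (univ.filter (· < j)) := by
    ext i
    simp [le_iff_lt_or_eq, or_comm]
  rw [h, Finset.sum_insert (by simp)]

private lemma ps_strictMono {n : ℕ} {k : Fin n → ℕ} (hk : ∀ i, 1 ≤ k i) :
    StrictMono (fun j => ∑ i ∈ univ.filter (· ≤ j), k i) := by
  intro a b hab
  apply Finset.sum_lt_sum_of_subset (i := b)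
  · intro i hi
    simp only [mem_filter, mem_univ, true_and] at *
    exact hi.trans hab.le
  · simp
  · simp [hab.not_ge]
  · exact hk b
  · intro j _ _; exact Nat.zero_le _

private lemma ps_injective {n : ℕ} {k k' : Fin n → ℕ}
    (h : ∀ j, ∑ i ∈ univ.filter (· ≤ j), k i = ∑ i ∈ univ.filter (· ≤ j), k' i) :
    k = k' := by
  funext j
  induction j using WellFoundedLT.induction with
  | _ j ih =>
    have hj := h j
    rw [ps_split, ps_split] at hj
    have hs : ∑ i ∈ univ.filter (· < j), k i = ∑ i ∈ univ.filter (· < j), k' i := by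
      apply Finset.sum_congr rfl
      intro i hi
      simp only [mem_filter, mem_univ, true_and] at hi
      exact ih i hi
    omega

private lemma count_le_choose (n N : ℕ) :
    Set.ncard {k : Fin n → ℕ | (∀ i, 1 ≤ k i) ∧ ∑ i, k i ≤ N} ≤ N.choose n := by
  classical
  have key := Set.ncard_le_ncard_of_injOn
    (f := fun k : Fin n → ℕ => Finset.image (fun j => ∑ i ∈ univ.filter (· ≤ j), k i) univ)
    (s := {k : Fin n → ℕ | (∀ i, 1 ≤ k i) ∧ ∑ i, k i ≤ N})
    (t := (↑(Finset.powersetCard n (Finset.Icc 1 N)) : Set (Finset ℕ)))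
    ?_ ?_ (Finset.finite_toSet _)
  · rwa [Set.ncard_coe_finset, Finset.card_powersetCard, Nat.card_Icc,
      Nat.add_sub_cancel] at key
  · rintro k ⟨hk1, hk2⟩
    simp only [Finset.coe_sort_coe, Finset.mem_coe, Finset.mem_powersetCard]
    constructor
    · intro a ha
      simp only [Finset.mem_image, Finset.mem_univ, true_and] at ha
      obtain ⟨j, rfl⟩ := ha
      rw [Finset.mem_Icc]
      constructor
      · calc 1 ≤ k j := hk1 j
          _ ≤ _ := Finset.single_le_sum (fun i _ => Nat.zero_le _) (by simp)
      · calc ∑ i ∈ univ.filter (· ≤ j), k i ≤ ∑ i, k i :=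
              Finset.sum_le_sum_of_subset (Finset.filter_subset _ _)
          _ ≤ N := hk2
    · rw [Finset.card_image_of_injective _ (ps_strictMono hk1).injective,
        Finset.card_univ, Fintype.card_fin]
  · rintro k ⟨hk1, -⟩ k' ⟨hk1', -⟩ himg
    simp only at himg
    set s : Finset ℕ := Finset.image (fun j => ∑ i ∈ univ.filter (· ≤ j), k i) univ with hs
    have hcard : s.card = n := by
      rw [hs, Finset.card_image_of_injective _ (ps_strictMono hk1).injective,
        Finset.card_univ, Fintype.card_fin]
    have hf : (fun j => ∑ i ∈ univ.filter (· ≤ j), k i)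
        = ⇑(s.orderEmbOfFin hcard) :=
      Finset.orderEmbOfFin_unique hcard (fun x => by simp [hs]) (ps_strictMono hk1)
    have hg : (fun j => ∑ i ∈ univ.filter (· ≤ j), k' i)
        = ⇑(s.orderEmbOfFin hcard) :=
      Finset.orderEmbOfFin_unique hcard
        (fun x => by rw [himg]; exact Finset.mem_image_of_mem _ (mem_univ x)) (ps_strictMono hk1')
    apply ps_injective
    intro j
    rw [show (∑ i ∈ univ.filter (· ≤ j), k i)
        = (fun j => ∑ i ∈ univ.filter (· ≤ j), k i) j from rfl, hf,
      show (∑ i ∈ univ.filter (· ≤ j), k' i)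
        = (fun j => ∑ i ∈ univ.filter (· ≤ j), k' i) j from rfl, hg]

private lemma choose_le_exp {n N : ℕ} {σ : ℝ} (hσ : 1 < σ)
    (hN : (N : ℝ) ≤ n * σ) :
    (N.choose n : ℝ) ≤ Real.exp (n * σ * Hent σ) := by
  rcases lt_or_ge N n with h | h
  · rw [Nat.choose_eq_zero_of_lt h, Nat.cast_zero]
    positivity
  · have hσ0 : (0:ℝ) < σ := lt_trans one_pos hσ
    set p : ℝ := 1 / σ with hp
    have hp0 : 0 < p := by positivity
    have hp1 : p < 1 := by rw [hp]; rw [div_lt_one hσ0]; exact hσ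
    have hq0 : 0 < 1 - p := by linarith
    -- binomial bound
    have hbin : (N.choose n : ℝ) * p ^ n * (1 - p) ^ (N - n) ≤ 1 := by
      have hsum : ∑ i ∈ Finset.range (N + 1), p ^ i * (1 - p) ^ (N - i) * N.choose i = 1 := by
        rw [← add_pow]
        simp
      calc (N.choose n : ℝ) * p ^ n * (1 - p) ^ (N - n)
          = p ^ n * (1 - p) ^ (N - n) * N.choose n := by ring
        _ ≤ ∑ i ∈ Finset.range (N + 1), p ^ i * (1 - p) ^ (N - i) * N.choose i :=
            Finset.single_le_sum (f := fun i => p ^ i * (1 - p) ^ (N - i) * (N.choose i : ℝ)) (fun i _ => by positivity)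
              (Finset.mem_range.mpr (Nat.lt_succ_of_le h))
        _ = 1 := hsum
    set x : ℝ := n * σ with hx
    have hxn : (n : ℝ) ≤ x := by
      calc (n:ℝ) ≤ N := Nat.cast_le.mpr h
        _ ≤ x := hN
    have hB0 : (0:ℝ) < p ^ n * (1 - p) ^ (x - n) :=
      mul_pos (pow_pos hp0 n) (Real.rpow_pos_of_pos hq0 _)
    have hABone : Real.exp (x * Hent σ) * (p ^ n * (1 - p) ^ (x - n)) = 1 := by
      have h1 : p ^ n = Real.exp ((n : ℝ) * Real.log p) := by
        rw [Real.exp_nat_mul, Real.exp_log hp0]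
      have h2 : (1 - p) ^ (x - n) = Real.exp ((x - n) * Real.log (1 - p)) := by
        rw [Real.rpow_def_of_pos hq0, mul_comm]
      rw [h1, h2, ← Real.exp_add, ← Real.exp_add, ← Real.exp_zero]
      congr 1
      rw [Hent, hx, hp]
      have hσne : σ ≠ 0 := ne_of_gt hσ0
      field_simp
      simp only [Real.exp_zero, one_div, div_eq_mul_inv]
      ring
    have hCB : (N.choose n : ℝ) * (p ^ n * (1 - p) ^ (x - n)) ≤ 1 := by
      have hle : (1 - p) ^ (x - n) ≤ (1 - p) ^ (N - n) := by
        have : (1 - p) ^ (x - n) ≤ (1 - p) ^ (((N - n : ℕ) : ℝ)) := by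
          apply Real.rpow_le_rpow_of_exponent_ge hq0 (by linarith)
          rw [Nat.cast_sub h]
          linarith
        rwa [Real.rpow_natCast] at this
      calc (N.choose n : ℝ) * (p ^ n * (1 - p) ^ (x - n))
          ≤ (N.choose n : ℝ) * (p ^ n * (1 - p) ^ (N - n)) := by
            apply mul_le_mul_of_nonneg_left _ (Nat.cast_nonneg _)
            exact mul_le_mul_of_nonneg_left hle (by positivity)
        _ = (N.choose n : ℝ) * p ^ n * (1 - p) ^ (N - n) := by ring
        _ ≤ 1 := hbin
    calc (N.choose n : ℝ)
        = (N.choose n : ℝ) * (p ^ n * (1 - p) ^ (x - n)) / (p ^ n * (1 - p) ^ (x - n)) := by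
          field_simp
      _ ≤ 1 / (p ^ n * (1 - p) ^ (x - n)) := by
          gcongr
      _ = Real.exp (x * Hent σ) := by
          rw [eq_comm, eq_div_iff (ne_of_gt hB0), hABone]

/-- For any real `σ > 0` and any natural number `m`, the number of sequences
`(k₀, ..., k_m)` of positive integers with `k₀ + ... + k_m ≤ (m+1)·σ` is at most
`exp((m+1)·σ·H(max σ 1))`. -/
theorem count_sequences_le_exp_entropy (σ : ℝ) (hσ : 0 < σ) (m : ℕ) :
    (Set.ncard {k : Fin (m + 1) → ℕ |
        (∀ i, 1 ≤ k i) ∧ (∑ i, (k i : ℝ)) ≤ (m + 1) * σ} : ℝ)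
      ≤ Real.exp ((m + 1) * σ * Hent (max σ 1)) := by
  set n := m + 1 with hn
  set N := ⌊(n : ℝ) * σ⌋₊ with hNdef
  have hxnonneg : (0:ℝ) ≤ (n : ℝ) * σ := by positivity
  have hset : {k : Fin n → ℕ | (∀ i, 1 ≤ k i) ∧ (∑ i, (k i : ℝ)) ≤ (m + 1) * σ}
      = {k : Fin n → ℕ | (∀ i, 1 ≤ k i) ∧ ∑ i, k i ≤ N} := by
    ext k
    simp only [Set.mem_setOf_eq, and_congr_right_iff]
    intro _
    rw [hNdef, Nat.le_floor_iff hxnonneg]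
    push_cast [hn]
    rfl
  rw [hset]
  have hcount : (Set.ncard {k : Fin n → ℕ | (∀ i, 1 ≤ k i) ∧ ∑ i, k i ≤ N} : ℝ)
      ≤ (N.choose n : ℝ) := Nat.cast_le.mpr (count_le_choose n N)
  refine hcount.trans ?_
  have hcast : ((m : ℝ) + 1) = (n : ℝ) := by push_cast [hn]; ring
  rcases lt_trichotomy σ 1 with hlt | heq | hgt
  · have hNn : N < n := by
      rw [hNdef, Nat.floor_lt hxnonneg]
      calc (n:ℝ) * σ < n * 1 := by
            apply mul_lt_mul_of_pos_left hlt (by positivity)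
        _ = n := mul_one _
    rw [Nat.choose_eq_zero_of_lt hNn, Nat.cast_zero]
    positivity
  · subst heq
    have hNn : N = n := by
      rw [hNdef, mul_one, Nat.floor_natCast]
    rw [hNn, Nat.choose_self, Nat.cast_one]
    have hmax : max (1:ℝ) 1 = 1 := max_self 1
    rw [hmax]
    have hH : Hent 1 = 0 := by simp [Hent]
    rw [hH, mul_zero, Real.exp_zero]
  · have hmax : max σ 1 = σ := max_eq_left hgt.le
    rw [hmax, hcast]
    exact choose_le_exp hgt (Nat.floor_le hxnonneg)
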